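/- arXiv:2012.06471 — 5 statements merged into one kernel-verified Lean document; each statement's English description precedes it below -/
import Mathlib

section
/- For a completely positive semidefinite matrix A of size n, cpsd-rank_G(A) ≤ cpsd-rank(A) ≤ n · cpsd-rank_G(A). -/
open Matrix

private lemma real_ct {m p : Type*} (M : Matrix m p ℝ) : Mᴴ = Mᵀ := by
  ext i j; simp [conjTranspose_apply]

private lemma trace_mul_self_transpose {α β : Type*} [Fintype α] [Fintype β]
    (M : Matrix α β ℝ) : (M * Mᵀ).trace = ∑ k, ∑ l, (M k l) ^ 2 := by
  simp [Matrix.trace, Matrix.mul_apply, sq]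

private lemma trace_factor {α β γ : Type*} [Fintype α] [Fintype β] [Fintype γ]
    (P : Matrix α β ℝ) (Q : Matrix α γ ℝ) :
    ((P * Pᵀ) * (Q * Qᵀ)).trace = ∑ k, ∑ l, ((Pᵀ * Q) k l) ^ 2 := by
  have h1 : (P * Pᵀ) * (Q * Qᵀ) = P * (Pᵀ * Q * Qᵀ) := by
    simp [Matrix.mul_assoc]
  rw [h1, Matrix.trace_mul_comm, ← trace_mul_self_transpose (Pᵀ * Q)]
  congr 1
  rw [Matrix.transpose_mul, Matrix.transpose_transpose]
  simp [Matrix.mul_assoc]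


private lemma sum_embed {ι κ : Type*} [Fintype ι] [Fintype κ] [DecidableEq ι] [DecidableEq κ]
    (t : ι ↪ κ) (a b : ι → ℝ) :
    ∑ c : κ, (∑ k, if t k = c then a k else 0) * (∑ k, if t k = c then b k else 0)
      = ∑ k, a k * b k := by
  simp only [Finset.sum_mul_sum, ite_mul, zero_mul, mul_ite, mul_zero]
  rw [Finset.sum_comm]
  refine Finset.sum_congr rfl fun k _ => ?_
  rw [Finset.sum_comm]
  simp [Finset.sum_ite_eq, t.injective.eq_iff]

private lemma exists_factor {d r : ℕ} {M : Matrix (Fin d) (Fin d) ℝ}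
    (hM : M.PosSemidef) (hr : M.rank ≤ r) :
    ∃ B : Matrix (Fin d) (Fin r) ℝ, M = B * Bᵀ := by
  classical
  have hH := hM.1
  obtain ⟨t⟩ : Nonempty ({k // hH.eigenvalues k ≠ 0} ↪ Fin r) := by
    apply Function.Embedding.nonempty_of_card_le
    rw [← hH.rank_eq_card_non_zero_eigs]
    simpa using hr
  set μ := hH.eigenvalues with hμ
  set U : Matrix (Fin d) (Fin d) ℝ := (hH.eigenvectorUnitary : Matrix (Fin d) (Fin d) ℝ) with hU
  have key : ∀ x y, M x y = ∑ j, μ j * (U x j * U y j) := by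
    intro x y
    conv_lhs => rw [hH.spectral_theorem]
    simp [Matrix.mul_apply, Matrix.diagonal_apply, Matrix.conjTranspose_apply,
      RCLike.ofReal_real_eq_id, Finset.sum_mul]
    exact Finset.sum_congr rfl fun j _ => by
      simp [hU, Matrix.IsHermitian.eigenvectorUnitary_apply]; ring
  refine ⟨Matrix.of (fun x c => ∑ k : {k // μ k ≠ 0},
      if t k = c then Real.sqrt (μ k) * U x k else 0), ?_⟩
  ext x y
  rw [Matrix.mul_apply]
  simp only [Matrix.transpose_apply, Matrix.of_apply]
  calc M x y = ∑ k : {k // μ k ≠ 0}, μ k.1 * (U x k.1 * U y k.1) := by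
        rw [key x y, ← Finset.sum_filter_of_ne (p := fun j => μ j ≠ 0)
          (fun j _ h hj => by simp [hj] at h),
          Finset.sum_subtype (p := fun j => μ j ≠ 0) _ (fun j => by simp)
            (fun j => μ j * (U x j * U y j))]
    _ = ∑ c : Fin r, (∑ k : {k // μ k ≠ 0}, if t k = c then Real.sqrt (μ k) * U x k else 0) *
          (∑ k : {k // μ k ≠ 0}, if t k = c then Real.sqrt (μ k) * U y k else 0) := by
        rw [sum_embed t (fun k => Real.sqrt (μ k.1) * U x k.1)
          (fun k => Real.sqrt (μ k.1) * U y k.1)]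
        refine Finset.sum_congr rfl fun k _ => ?_
        rw [show Real.sqrt (μ k.1) * U x k.1 * (Real.sqrt (μ k.1) * U y k.1)
            = (Real.sqrt (μ k.1) * Real.sqrt (μ k.1)) * (U x k.1 * U y k.1) by ring,
          Real.mul_self_sqrt (hM.eigenvalues_nonneg k.1)]

open scoped MatrixOrder in
private lemma construction {n d r : ℕ} (f : Fin n → Matrix (Fin d) (Fin d) ℝ)
    (hpsd : ∀ i, (f i).PosSemidef) (hrank : ∀ i, (f i).rank ≤ r) :
    ∃ g : Fin n → Matrix (Fin (n * r)) (Fin (n * r)) ℝ,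
      (∀ i, (g i).PosSemidef) ∧ ∀ i j, ((g i) * (g j)).trace = ((f i) * (f j)).trace := by
  classical
  choose B hB using fun i => exists_factor (hpsd i) (hrank i)
  set ι := Fin n × Fin r
  set CB : Matrix (Fin d) ι ℝ := Matrix.of (fun x p => B p.1 x p.2) with hCB
  have hG : (CBᴴ * CB).PosSemidef := Matrix.posSemidef_conjTranspose_mul_self CB
  set H : Matrix ι ι ℝ := CFC.sqrt (CBᴴ * CB) with hHdef
  have hHpsd : H.PosSemidef := (CFC.sqrt_nonneg _).posSemidef
  have hHH : H * H = CBᴴ * CB := CFC.sqrt_mul_sqrt_self _ hG.nonneg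
  have hHsymm : Hᵀ = H := by rw [← real_ct]; exact hHpsd.1
  set Hs : Fin n → Matrix ι (Fin r) ℝ := fun i => Matrix.of (fun x k => H x (i, k)) with hHs
  -- key: (B i)ᵀ * B j = (Hs i)ᵀ * Hs j
  have hkey : ∀ i j, (B i)ᵀ * B j = (Hs i)ᵀ * Hs j := by
    intro i j
    ext k l
    have h1 : ((B i)ᵀ * B j) k l = (CBᴴ * CB) (i, k) (j, l) := by
      simp [Matrix.mul_apply, Matrix.conjTranspose_apply, hCB]
    have h2 : ((Hs i)ᵀ * Hs j) k l = (H * H) (i, k) (j, l) := by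
      simp only [Matrix.mul_apply, Matrix.transpose_apply, hHs, Matrix.of_apply]
      refine Finset.sum_congr rfl fun p _ => ?_
      rw [show H p (i, k) = Hᵀ (i, k) p from rfl, hHsymm]
    rw [h1, h2, hHH]
  set e : ι ≃ Fin (n * r) := finProdFinEquiv
  refine ⟨fun i => (Hs i * (Hs i)ᵀ).submatrix e.symm e.symm, fun i => ?_, fun i j => ?_⟩
  · have : (Hs i * (Hs i)ᵀ).PosSemidef := by
      have := Matrix.posSemidef_self_mul_conjTranspose (Hs i)
      rwa [real_ct] at this
    exact this.submatrix _
  · rw [Matrix.submatrix_mul_equiv]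
    have htr : ∀ (M : Matrix ι ι ℝ), (M.submatrix e.symm e.symm).trace = M.trace := by
      intro M
      simp only [Matrix.trace, Matrix.diag, Matrix.submatrix_apply]
      exact Fintype.sum_equiv e.symm _ _ (fun x => rfl)
    rw [htr, trace_factor (Hs i) (Hs j), ← hkey, hB i, hB j, trace_factor (B i) (B j)]

/-- The cpsd-rank of `A`: the smallest `d` such that `A` has a Gram representation
by psd matrices of size `d`. -/
noncomputable def cpsdRank {n : ℕ} (A : Matrix (Fin n) (Fin n) ℝ) : ℕ :=
  sInf {d : ℕ | ∃ f : Fin n → Matrix (Fin d) (Fin d) ℝ,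
    (∀ i, (f i).PosSemidef) ∧ ∀ i j, A i j = ((f i) * (f j)).trace}

/-- The Gram-cpsd-rank of `A`: the smallest `r` such that `A` has a Gram representation
by psd matrices (of some size `d`), each of rank at most `r`. -/
noncomputable def cpsdRankG {n : ℕ} (A : Matrix (Fin n) (Fin n) ℝ) : ℕ :=
  sInf {r : ℕ | ∃ (d : ℕ) (f : Fin n → Matrix (Fin d) (Fin d) ℝ),
    (∀ i, (f i).PosSemidef) ∧ (∀ i, (f i).rank ≤ r) ∧
    ∀ i j, A i j = ((f i) * (f j)).trace}

theorem cpsdRankG_le_cpsdRank_le_mul {n : ℕ} (A : Matrix (Fin n) (Fin n) ℝ)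
    (hA : ∃ (d : ℕ) (f : Fin n → Matrix (Fin d) (Fin d) ℝ),
      (∀ i, (f i).PosSemidef) ∧ ∀ i j, A i j = ((f i) * (f j)).trace) :
    cpsdRankG A ≤ cpsdRank A ∧ cpsdRank A ≤ n * cpsdRankG A := by
  obtain ⟨d0, f0, h0psd, h0g⟩ := hA
  have hSne : {d : ℕ | ∃ f : Fin n → Matrix (Fin d) (Fin d) ℝ,
      (∀ i, (f i).PosSemidef) ∧ ∀ i j, A i j = ((f i) * (f j)).trace}.Nonempty :=
    ⟨d0, f0, h0psd, h0g⟩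
  obtain ⟨f, hfpsd, hfg⟩ : ∃ f : Fin n → Matrix (Fin (cpsdRank A)) (Fin (cpsdRank A)) ℝ,
      (∀ i, (f i).PosSemidef) ∧ ∀ i j, A i j = ((f i) * (f j)).trace :=
    Nat.sInf_mem hSne
  have hGne : {r : ℕ | ∃ (d : ℕ) (f : Fin n → Matrix (Fin d) (Fin d) ℝ),
      (∀ i, (f i).PosSemidef) ∧ (∀ i, (f i).rank ≤ r) ∧
      ∀ i j, A i j = ((f i) * (f j)).trace}.Nonempty :=
    ⟨d0, d0, f0, h0psd, fun i => ((f0 i).rank_le_card_width).trans (Fintype.card_fin _).le, h0g⟩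
  obtain ⟨d, g, hgpsd, hgrank, hgg⟩ : ∃ (d : ℕ)
      (g : Fin n → Matrix (Fin d) (Fin d) ℝ),
      (∀ i, (g i).PosSemidef) ∧ (∀ i, (g i).rank ≤ cpsdRankG A) ∧
      ∀ i j, A i j = ((g i) * (g j)).trace :=
    Nat.sInf_mem hGne
  constructor
  · exact Nat.sInf_le ⟨cpsdRank A, f, hfpsd,
      fun i => ((f i).rank_le_card_width).trans (Fintype.card_fin _).le, hfg⟩
  · obtain ⟨g', hg'psd, hg'tr⟩ := construction g hgpsd hgrank
    exact Nat.sInf_le ⟨g', hg'psd, fun i j => (hgg i j).trans (hg'tr i j).symm⟩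
end

section
/- For every n, r ≥ 1, the set CPSD^n_{≤r} of n×n matrices admitting a Gram representation by positive semidefinite r×r matrices is a closed subset of the space of real symmetric n×n matrices. -/
open Matrix Filter Topology Set

private lemma trace_sq_eq_sum {r : ℕ} (B : Matrix (Fin r) (Fin r) ℝ)
    (hB : B.IsHermitian) : (B * B).trace = ∑ a, ∑ b, (B a b) ^ 2 := by
  simp only [Matrix.trace, Matrix.diag, Matrix.mul_apply]
  refine Finset.sum_congr rfl fun a _ => Finset.sum_congr rfl fun b _ => ?_
  have h := hB.apply b a
  simp only [RCLike.star_def, starRingEnd_apply, star_trivial] at h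
  rw [h, sq]

private lemma entry_le_sqrt {r : ℕ} (B : Matrix (Fin r) (Fin r) ℝ)
    (hB : B.IsHermitian) {C : ℝ} (h : (B * B).trace ≤ C) (a b : Fin r) :
    |B a b| ≤ Real.sqrt C := by
  have h1 : (B a b) ^ 2 ≤ ∑ a', ∑ b', (B a' b') ^ 2 := by
    calc (B a b) ^ 2 ≤ ∑ b', (B a b') ^ 2 :=
          Finset.single_le_sum (f := fun b' => (B a b') ^ 2)
            (fun i _ => sq_nonneg _) (Finset.mem_univ b)
      _ ≤ ∑ a', ∑ b', (B a' b') ^ 2 :=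
          Finset.single_le_sum (f := fun a' => ∑ b', (B a' b') ^ 2)
            (fun i _ => Finset.sum_nonneg fun j _ => sq_nonneg _) (Finset.mem_univ a)
  have h2 : (B a b) ^ 2 ≤ C := h1.trans (by rw [← trace_sq_eq_sum B hB]; exact h)
  calc |B a b| = Real.sqrt ((B a b) ^ 2) := (Real.sqrt_sq_eq_abs _).symm
    _ ≤ Real.sqrt C := Real.sqrt_le_sqrt h2

theorem cpsd_le_r_isClosed (n r : ℕ) (hn : 1 ≤ n) (hr : 1 ≤ r) :
    IsClosed {A : Matrix (Fin n) (Fin n) ℝ |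
      ∃ f : Fin n → Matrix (Fin r) (Fin r) ℝ,
        (∀ i, (f i).PosSemidef) ∧ ∀ i j, A i j = ((f i) * (f j)).trace} := by
  haveI : FirstCountableTopology (Matrix (Fin n) (Fin n) ℝ) :=
    inferInstanceAs (FirstCountableTopology (Fin n → Fin n → ℝ))
  apply IsSeqClosed.isClosed
  intro x A hx hlim
  choose f hf1 hf2 using hx
  -- the entries converge
  have hent : ∀ i j : Fin n, Tendsto (fun k => x k i j) atTop (𝓝 (A i j)) := by
    intro i j
    exact (((continuous_apply j).comp (continuous_apply i)).tendsto A).comp hlim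
  -- uniform entrywise bound on the Gram vectors
  have hbdd : ∀ i : Fin n, ∃ R : ℝ, ∀ k a b, |f k i a b| ≤ R := by
    intro i
    obtain ⟨C, hC⟩ := (hent i i).bddAbove_range
    refine ⟨Real.sqrt C, fun k a b => ?_⟩
    refine entry_le_sqrt _ (hf1 k i).1 ?_ a b
    rw [← hf2 k i i]
    exact hC (Set.mem_range_self k)
  choose R hR using hbdd
  set S : Set (Fin n → Matrix (Fin r) (Fin r) ℝ) :=
    Set.pi Set.univ fun i => Set.pi Set.univ fun _a : Fin r =>
      Set.pi Set.univ fun _b : Fin r => Set.Icc (-(R i)) (R i) with hS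
  have hScomp : IsCompact S :=
    isCompact_univ_pi fun i => isCompact_univ_pi fun _a =>
      isCompact_univ_pi fun _b => isCompact_Icc
  have hmem : ∀ k, f k ∈ S := by
    intro k i _ a _ b _
    exact abs_le.mp (hR i k a b)
  haveI : FirstCountableTopology (Fin n → Matrix (Fin r) (Fin r) ℝ) :=
    inferInstanceAs (FirstCountableTopology (Fin n → Fin r → Fin r → ℝ))
  obtain ⟨g, -, φ, hφ, hg⟩ := hScomp.tendsto_subseq hmem
  have hga : ∀ (i : Fin n) (a b : Fin r),
      Tendsto (fun k => f (φ k) i a b) atTop (𝓝 (g i a b)) := by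
    intro i a b
    exact ((((continuous_apply b).comp (continuous_apply a)).comp
      (continuous_apply i)).tendsto g).comp hg
  refine ⟨g, fun i => ?_, fun i j => ?_⟩
  · refine Matrix.PosSemidef.of_dotProduct_mulVec_nonneg ?_ ?_
    · refine Matrix.ext fun a b => ?_
      have h1 : Tendsto (fun k => f (φ k) i b a) atTop (𝓝 (g i b a)) := hga i b a
      have h2 : Tendsto (fun k => f (φ k) i b a) atTop (𝓝 (g i a b)) := by
        have : ∀ k, f (φ k) i b a = f (φ k) i a b := fun k => by
          have h := (hf1 (φ k) i).1.apply a b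
          simpa using h
        simpa only [this] using hga i a b
      have hba : g i b a = g i a b := tendsto_nhds_unique h1 h2
      simpa [Matrix.conjTranspose_apply] using hba
    · intro v
      have h1 : Tendsto (fun k => dotProduct (star v) (f (φ k) i *ᵥ v)) atTop
          (𝓝 (dotProduct (star v) (g i *ᵥ v))) := by
        simp only [dotProduct, Matrix.mulVec, dotProduct]
        exact tendsto_finset_sum _ fun a _ => (tendsto_const_nhds.mul
          (tendsto_finset_sum _ fun b _ => (hga i a b).mul tendsto_const_nhds))
      exact ge_of_tendsto' h1 fun k => (hf1 (φ k) i).dotProduct_mulVec_nonneg v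
  · have h1 : Tendsto (fun k => x (φ k) i j) atTop (𝓝 (A i j)) :=
      (hent i j).comp hφ.tendsto_atTop
    have h2 : Tendsto (fun k => (f (φ k) i * f (φ k) j).trace) atTop
        (𝓝 ((g i * g j).trace)) := by
      simp only [Matrix.trace, Matrix.diag, Matrix.mul_apply]
      exact tendsto_finset_sum _ fun a _ =>
        tendsto_finset_sum _ fun b _ => (hga i a b).mul (hga j b a)
    have h3 : Tendsto (fun k => x (φ k) i j) atTop (𝓝 ((g i * g j).trace)) := by
      simpa only [fun k => hf2 (φ k) i j] using h2
    exact tendsto_nhds_unique h1 h3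
end

section
/- Low-rank approximation of psd matrices: for every A ∈ S_+^d and every ε > 0, there exists B ∈ S_+^d with tr(B) = tr(A), ‖A − B‖_F < ε, and rank(B) ≤ ⌈tr(A)²/ε²⌉. -/
open Matrix Finset

/-- One can choose a set of `k` indices carrying the `k` largest values of `f`. -/
lemma exists_top_finset {d : ℕ} (f : Fin d → ℝ) :
    ∀ k : ℕ, k ≤ d → ∃ S : Finset (Fin d), S.card = k ∧ ∀ i ∈ S, ∀ j ∉ S, f j ≤ f i := by
  intro k
  induction k with
  | zero => exact fun _ => ⟨∅, rfl, by simp⟩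
  | succ k ih =>
    intro hk
    obtain ⟨S, hScard, hStop⟩ := ih (Nat.le_of_succ_le hk)
    have hcompl : (Sᶜ : Finset (Fin d)).Nonempty := by
      rw [← Finset.card_pos, Finset.card_compl, hScard, Fintype.card_fin]
      omega
    obtain ⟨x, hxmem, hxmax⟩ := Finset.exists_max_image (Sᶜ) f hcompl
    have hxS : x ∉ S := Finset.mem_compl.mp hxmem
    refine ⟨insert x S, by rw [Finset.card_insert_of_notMem hxS, hScard], ?_⟩
    intro i hi j hj
    have hjS : j ∉ S := fun h => hj (Finset.mem_insert_of_mem h)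
    rcases Finset.mem_insert.mp hi with rfl | hiS
    · exact hxmax j (Finset.mem_compl.mpr hjS)
    · exact hStop i hiS j hjS

theorem psd_low_rank_approx {d : ℕ} (A : Matrix (Fin d) (Fin d) ℝ)
    (hA : A.PosSemidef) (ε : ℝ) (hε : 0 < ε) :
    ∃ B : Matrix (Fin d) (Fin d) ℝ, B.PosSemidef ∧ B.trace = A.trace ∧
      Real.sqrt (((A - B) * (A - B)).trace) < ε ∧
      B.rank ≤ ⌈A.trace ^ 2 / ε ^ 2⌉₊ := by
  classical
  have hH : A.IsHermitian := hA.1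
  set k : ℕ := ⌈A.trace ^ 2 / ε ^ 2⌉₊ with hk
  by_cases hdk : d ≤ k
  · -- trivial case: B = A
    refine ⟨A, hA, rfl, ?_, le_trans (A.rank_le_card_width) (by simpa using hdk)⟩
    simpa using hε
  push_neg at hdk
  set U : Matrix (Fin d) (Fin d) ℝ := (hH.eigenvectorUnitary : Matrix (Fin d) (Fin d) ℝ) with hUdef
  set lam : Fin d → ℝ := hH.eigenvalues with hlam
  have hsUU : star U * U = 1 := Unitary.coe_star_mul_self _
  have hUsU : U * star U = 1 := Unitary.coe_mul_star_self _
  have hspec : A = U * Matrix.diagonal lam * star U := by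
    have := hH.spectral_theorem
    simpa [RCLike.ofReal_real_eq_id] using this
  have hlam_nonneg : ∀ i, 0 ≤ lam i := fun i => hA.eigenvalues_nonneg i
  -- general facts about conjugated diagonals
  have htrC : ∀ ν : Fin d → ℝ, (U * Matrix.diagonal ν * star U).trace = ∑ i, ν i := by
    intro ν
    rw [Matrix.trace_mul_comm, ← mul_assoc, hsUU, one_mul, Matrix.trace_diagonal]
  have hmulC : ∀ ν μ : Fin d → ℝ,
      (U * Matrix.diagonal ν * star U) * (U * Matrix.diagonal μ * star U)
        = U * Matrix.diagonal (fun i => ν i * μ i) * star U := by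
    intro ν μ
    calc (U * Matrix.diagonal ν * star U) * (U * Matrix.diagonal μ * star U)
        = U * Matrix.diagonal ν * (star U * U) * Matrix.diagonal μ * star U := by
          simp only [mul_assoc]
      _ = U * Matrix.diagonal (fun i => ν i * μ i) * star U := by
          rw [hsUU, mul_one]
          rw [mul_assoc U, Matrix.diagonal_mul_diagonal]
  have hsubC : ∀ ν μ : Fin d → ℝ,
      (U * Matrix.diagonal ν * star U) - (U * Matrix.diagonal μ * star U)
        = U * Matrix.diagonal (fun i => ν i - μ i) * star U := by
    intro ν μ
    rw [← Matrix.diagonal_sub, mul_sub, sub_mul]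
  have hpsdC : ∀ ν : Fin d → ℝ, (∀ i, 0 ≤ ν i) →
      (U * Matrix.diagonal ν * star U).PosSemidef := by
    intro ν hν
    have := (Matrix.posSemidef_diagonal_iff.mpr hν).mul_mul_conjTranspose_same U
    simpa [Matrix.star_eq_conjTranspose] using this
  have hdetU : IsUnit U.det := Matrix.isUnit_det_of_right_inverse hUsU
  have hdetsU : IsUnit (star U).det := Matrix.isUnit_det_of_right_inverse hsUU
  have hrankC : ∀ ν : Fin d → ℝ,
      (U * Matrix.diagonal ν * star U).rank = (Matrix.diagonal ν).rank := by
    intro ν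
    rw [Matrix.rank_mul_eq_left_of_isUnit_det _ _ hdetsU,
      Matrix.rank_mul_eq_right_of_isUnit_det _ _ hdetU]
  have htrA : A.trace = ∑ i, lam i := by rw [← htrC lam, ← hspec]
  rcases eq_or_lt_of_le (show (0:ℝ) ≤ A.trace from htrA ▸ Finset.sum_nonneg fun i _ => hlam_nonneg i) with ht0 | htpos
  · -- trace zero: A = 0
    have hlam0 : ∀ i ∈ Finset.univ, lam i = 0 :=
      (Finset.sum_eq_zero_iff_of_nonneg (fun i _ => hlam_nonneg i)).mp (by rw [← htrA, ← ht0])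
    have hA0 : A = 0 := by
      rw [hspec, show Matrix.diagonal lam = 0 by
        rw [show lam = fun _ => 0 from funext fun i => hlam0 i (Finset.mem_univ i)]
        simp]
      simp
    exact ⟨0, Matrix.PosSemidef.zero, by simp [hA0], by simpa [hA0] using hε, by simp⟩
  · -- main case: 0 < trace A
    have hk1 : 1 ≤ k := by
      rw [hk, Nat.one_le_ceil_iff]
      positivity
    obtain ⟨S, hScard, hStop⟩ := exists_top_finset lam k (le_of_lt hdk)
    set s : ℝ := ∑ j ∈ Sᶜ, lam j with hsdef
    have hs_nonneg : 0 ≤ s := Finset.sum_nonneg fun j _ => hlam_nonneg j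
    set K : ℝ := (k : ℝ) with hKdef
    have hKpos : (0:ℝ) < K := by
      have : (1:ℝ) ≤ K := by rw [hKdef]; exact_mod_cast hk1
      linarith
    set ν : Fin d → ℝ := fun i => if i ∈ S then lam i + s / K else 0 with hνdef
    have hν_nonneg : ∀ i, 0 ≤ ν i := by
      intro i
      simp only [hνdef]
      split
      · have := hlam_nonneg i; positivity
      · exact le_refl 0
    refine ⟨U * Matrix.diagonal ν * star U, hpsdC ν hν_nonneg, ?_, ?_, ?_⟩
    · -- trace
      rw [htrC]
      have : ∑ i, ν i = ∑ i ∈ S, (lam i + s / K) := by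
        rw [hνdef]
        rw [Finset.sum_ite_mem]
        congr 1
        simp
      rw [this, Finset.sum_add_distrib, Finset.sum_const, hScard, nsmul_eq_mul,
        ← hKdef, mul_div_cancel₀ _ (ne_of_gt hKpos), htrA, ← Finset.sum_add_sum_compl S lam]
    · -- error bound
      have hdiff : A - U * Matrix.diagonal ν * star U
          = U * Matrix.diagonal (fun i => lam i - ν i) * star U := by
        conv_lhs => rw [hspec]
        exact hsubC lam ν
      rw [hdiff, hmulC, htrC, Real.sqrt_lt' hε]
      -- compute the sum
      have hsum : ∑ i, (lam i - ν i) * (lam i - ν i)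
          = K * (s / K) ^ 2 + ∑ j ∈ Sᶜ, lam j ^ 2 := by
        rw [← Finset.sum_add_sum_compl S]
        congr 1
        · rw [Finset.sum_congr rfl (g := fun _ => (s / K)^2)
            (fun i hi => by simp only [hνdef, if_pos hi]; ring)]
          rw [Finset.sum_const, hScard, nsmul_eq_mul, ← hKdef]
        · refine Finset.sum_congr rfl fun j hj => by
            simp only [hνdef, if_neg (Finset.mem_compl.mp hj)]; ring
      rw [hsum]
      -- the max of the tail
      have hcompl : (Sᶜ : Finset (Fin d)).Nonempty := by
        rw [← Finset.card_pos, Finset.card_compl, hScard, Fintype.card_fin]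
        omega
      obtain ⟨j₀, hj₀, hj₀max⟩ := Finset.exists_max_image (Sᶜ) lam hcompl
      set m : ℝ := lam j₀ with hmdef
      have hm_nonneg : 0 ≤ m := hlam_nonneg j₀
      have h1 : ∑ j ∈ Sᶜ, lam j ^ 2 ≤ m * s := by
        rw [hsdef, Finset.mul_sum]
        refine Finset.sum_le_sum fun j hj => ?_
        have := hj₀max j hj
        have := hlam_nonneg j
        nlinarith
      have h2 : K * m + s ≤ A.trace := by
        have hcard : S.card • m ≤ ∑ i ∈ S, lam i :=
          Finset.card_nsmul_le_sum S lam m fun i hi =>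
            hStop i hi j₀ (Finset.mem_compl.mp hj₀)
        rw [hScard, nsmul_eq_mul, ← hKdef] at hcard
        rw [htrA, ← Finset.sum_add_sum_compl S lam]
        linarith
      have h3 : A.trace ^ 2 ≤ K * ε ^ 2 := by
        have := Nat.le_ceil (A.trace ^ 2 / ε ^ 2)
        rw [← hk, ← hKdef] at this
        rw [div_le_iff₀ (by positivity)] at this
        linarith
      rcases eq_or_lt_of_le hs_nonneg with hs0 | hs_pos
      · -- tail is zero
        have hsq0 : ∑ j ∈ Sᶜ, lam j ^ 2 = 0 := by
          refine le_antisymm ?_ (Finset.sum_nonneg fun j _ => sq_nonneg _)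
          calc ∑ j ∈ Sᶜ, lam j ^ 2 ≤ m * s := h1
            _ = 0 := by rw [← hs0, mul_zero]
        rw [hsq0, ← hs0]
        simpa using pow_pos hε 2
      · -- tail positive, so m positive
        have hm_pos : 0 < m := by
          by_contra hm
          push_neg at hm
          have : s = 0 := by
            rw [hsdef]
            refine Finset.sum_eq_zero fun j hj => le_antisymm ?_ (hlam_nonneg j)
            exact le_trans (hj₀max j hj) hm
          linarith
        have key : s ^ 2 + K * (m * s) < K * ε ^ 2 := by
          have htpos' : 0 < A.trace := htpos
          nlinarith [mul_le_mul_of_nonneg_right h2 (le_of_lt hs_pos),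
            mul_pos (mul_pos hKpos hm_pos) htpos']
        have hE : K * (s / K) ^ 2 = s ^ 2 / K := by
          field_simp
        rw [hE]
        calc s ^ 2 / K + ∑ j ∈ Sᶜ, lam j ^ 2
            ≤ s ^ 2 / K + m * s := by linarith
          _ = (s ^ 2 + K * (m * s)) / K := by field_simp
          _ < ε ^ 2 := by rw [div_lt_iff₀ hKpos]; nlinarith [key]
    · -- rank bound
      rw [hrankC, Matrix.rank_diagonal]
      have hsub : Finset.univ.filter (fun i => ν i ≠ 0) ⊆ S := by
        intro i hi
        rcases Finset.mem_filter.mp hi with ⟨-, hne⟩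
        by_contra hiS
        exact hne (by simp [hνdef, if_neg hiS])
      calc Fintype.card {i // ν i ≠ 0}
          = (Finset.univ.filter (fun i => ν i ≠ 0)).card := Fintype.card_subtype _
        _ ≤ S.card := Finset.card_le_card hsub
        _ = k := hScard
end

section
/- If Q : ℝ^d → ℝ^r is linear and u₁,…,u_m ∈ ℝ^d are unit vectors satisfying |u_iᵗu_j − (Qu_i)ᵗ(Qu_j)| ≤ 3ε for all i,j (with 0 < ε < 1), then for any psd matrices A = Σ_k λ_k u_k u_kᵗ and B = Σ_{k'} μ_{k'} u_{k'} u_{k'}ᵗ with λ_k, μ_{k'} ≥ 0, the matrices A'' = Σ_k λ_k (Qu_k)(Qu_k)ᵗ and B'' = Σ_{k'} μ_{k'} (Qu_{k'})(Qu_{k'})ᵗ satisfy |tr(AB) − tr(A''B'')| ≤ (6ε + 9ε²)·tr(A)·tr(B). -/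
open Matrix Finset

lemma trace_vvT_mul {n : ℕ} (u v : Fin n → ℝ) :
    ((Matrix.vecMulVec u u) * (Matrix.vecMulVec v v)).trace = (dotProduct u v) ^ 2 := by
  simp only [Matrix.trace, Matrix.diag, Matrix.mul_apply, Matrix.vecMulVec_apply,
    dotProduct, sq, Finset.sum_mul_sum]
  rw [Finset.sum_comm]
  apply Finset.sum_congr rfl; intro i _
  apply Finset.sum_congr rfl; intro j _
  ring

lemma sq_bound (ε a b : ℝ) (hε : 0 < ε) (ha : |a| ≤ 1) (hab : |a - b| ≤ 3 * ε) :
    |a ^ 2 - b ^ 2| ≤ 6 * ε + 9 * ε ^ 2 := by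
  rw [abs_le] at *
  constructor <;> nlinarith [sq_nonneg (a - b), sq_nonneg (a + b), sq_nonneg (a*b)]

theorem jl_trace_perturbation {d r m : ℕ}
    (Q : Matrix (Fin r) (Fin d) ℝ) (u : Fin m → (Fin d → ℝ))
    (hu : ∀ k, (∑ l, u k l ^ 2) = 1)
    (ε : ℝ) (hε0 : 0 < ε) (hε1 : ε < 1)
    (hQ : ∀ i j, |dotProduct (u i) (u j) - dotProduct (Q.mulVec (u i)) (Q.mulVec (u j))| ≤ 3 * ε)
    (lam mu : Fin m → ℝ) (hlam : ∀ k, 0 ≤ lam k) (hmu : ∀ k, 0 ≤ mu k)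
    (A B : Matrix (Fin d) (Fin d) ℝ) (A2 B2 : Matrix (Fin r) (Fin r) ℝ)
    (hA : A = ∑ k, lam k • Matrix.vecMulVec (u k) (u k))
    (hB : B = ∑ k, mu k • Matrix.vecMulVec (u k) (u k))
    (hA2 : A2 = ∑ k, lam k • Matrix.vecMulVec (Q.mulVec (u k)) (Q.mulVec (u k)))
    (hB2 : B2 = ∑ k, mu k • Matrix.vecMulVec (Q.mulVec (u k)) (Q.mulVec (u k))) :
    |(A * B).trace - (A2 * B2).trace| ≤ (6 * ε + 9 * ε ^ 2) * A.trace * B.trace := by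
  set w : Fin m → Fin r → ℝ := fun k => Q.mulVec (u k) with hw
  -- trace of products
  have hdself : ∀ k, dotProduct (u k) (u k) = 1 := by
    intro k; rw [← hu k]; simp [dotProduct, sq]
  have hTrA : A.trace = ∑ k, lam k := by
    rw [hA, Matrix.trace_sum]
    apply Finset.sum_congr rfl; intro k _
    rw [Matrix.trace_smul, smul_eq_mul]
    have : (Matrix.vecMulVec (u k) (u k)).trace = dotProduct (u k) (u k) := by
      simp [Matrix.trace, Matrix.diag, Matrix.vecMulVec_apply, dotProduct]
    rw [this, hdself k, mul_one]
  have hTrB : B.trace = ∑ k, mu k := by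
    rw [hB, Matrix.trace_sum]
    apply Finset.sum_congr rfl; intro k _
    rw [Matrix.trace_smul, smul_eq_mul]
    have : (Matrix.vecMulVec (u k) (u k)).trace = dotProduct (u k) (u k) := by
      simp [Matrix.trace, Matrix.diag, Matrix.vecMulVec_apply, dotProduct]
    rw [this, hdself k, mul_one]
  have hTrAB : (A * B).trace = ∑ k, ∑ k', lam k * mu k' * (dotProduct (u k) (u k')) ^ 2 := by
    rw [hA, hB, Finset.sum_mul_sum, Matrix.trace_sum]
    apply Finset.sum_congr rfl; intro k _
    rw [Matrix.trace_sum]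
    apply Finset.sum_congr rfl; intro k' _
    rw [smul_mul_smul_comm, Matrix.trace_smul, trace_vvT_mul, smul_eq_mul]
  have hTrA2B2 : (A2 * B2).trace = ∑ k, ∑ k', lam k * mu k' * (dotProduct (w k) (w k')) ^ 2 := by
    rw [hA2, hB2, Finset.sum_mul_sum, Matrix.trace_sum]
    apply Finset.sum_congr rfl; intro k _
    rw [Matrix.trace_sum]
    apply Finset.sum_congr rfl; intro k' _
    rw [smul_mul_smul_comm, Matrix.trace_smul, trace_vvT_mul, smul_eq_mul]
  -- Cauchy-Schwarz: |u i ⬝ u j| ≤ 1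
  have hCS : ∀ i j, |dotProduct (u i) (u j)| ≤ 1 := by
    intro i j
    have h := Finset.sum_mul_sq_le_sq_mul_sq Finset.univ (u i) (u j)
    rw [hu i, hu j, one_mul] at h
    have : (dotProduct (u i) (u j)) ^ 2 ≤ 1 := h
    nlinarith [abs_nonneg (dotProduct (u i) (u j)), sq_abs (dotProduct (u i) (u j))]
  rw [hTrAB, hTrA2B2, hTrA, hTrB, ← Finset.sum_sub_distrib]
  calc |∑ k, (∑ k', lam k * mu k' * dotProduct (u k) (u k') ^ 2 -
        ∑ k', lam k * mu k' * dotProduct (w k) (w k') ^ 2)|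
      ≤ ∑ k, ∑ k', lam k * mu k' * (6 * ε + 9 * ε ^ 2) := by
        apply (Finset.abs_sum_le_sum_abs _ _).trans
        apply Finset.sum_le_sum; intro k _
        rw [← Finset.sum_sub_distrib]
        apply (Finset.abs_sum_le_sum_abs _ _).trans
        apply Finset.sum_le_sum; intro k' _
        rw [← mul_sub, abs_mul, abs_of_nonneg (mul_nonneg (hlam k) (hmu k'))]
        apply mul_le_mul_of_nonneg_left _ (mul_nonneg (hlam k) (hmu k'))
        exact sq_bound ε _ _ hε0 (hCS k k') (hQ k k')
    _ = (6 * ε + 9 * ε ^ 2) * (∑ k, lam k) * (∑ k, mu k) := by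
        simp only [Finset.sum_mul, Finset.mul_sum]
        rw [Finset.sum_comm]
        apply Finset.sum_congr rfl; intro k _
        apply Finset.sum_congr rfl; intro k' _
        ring
end

section
/- Main approximation theorem (first bound): Let M = (tr(A_iA_j))_{i,j=1}^n ∈ CPSD^n with ℓ = max_i tr(A_i) and L = max_i M_{ii}. For every 0 < ε < (1/2)min{ℓ², L} there exists N ∈ CPSD^n with cpsd-rank(N) ≤ n⌈9Lℓ²/(2ε²)⌉ and |M_{ij} − N_{ij}| < ε for all i, j. -/
open Matrix Finset

lemma trace_eq_sum_prod' {d : ℕ} (X Y : Matrix (Fin d) (Fin d) ℝ) :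
    (X * Y).trace = ∑ p : Fin d × Fin d, X p.1 p.2 * Y p.2 p.1 := by
  rw [Matrix.trace, Fintype.sum_prod_type]
  simp only [Matrix.diag_apply, Matrix.mul_apply]

/-- Cauchy–Schwarz for the trace inner product of symmetric real matrices. -/
lemma trace_mul_cs {d : ℕ} {X Y : Matrix (Fin d) (Fin d) ℝ}
    (hX : X.IsHermitian) (hY : Y.IsHermitian) :
    |(X * Y).trace| ≤ Real.sqrt (X * X).trace * Real.sqrt (Y * Y).trace := by
  have hYs : ∀ a b, Y b a = Y a b := by
    intro a b; conv_lhs => rw [← hY]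
    simp [conjTranspose_apply]
  have hXs : ∀ a b, X b a = X a b := by
    intro a b; conv_lhs => rw [← hX]
    simp [conjTranspose_apply]
  have h1 : (X * Y).trace = ∑ p : Fin d × Fin d, X p.1 p.2 * Y p.1 p.2 := by
    rw [trace_eq_sum_prod']
    exact Finset.sum_congr rfl fun p _ => by rw [hYs]
  have h2 : (X * X).trace = ∑ p : Fin d × Fin d, X p.1 p.2 ^ 2 := by
    rw [trace_eq_sum_prod']
    exact Finset.sum_congr rfl fun p _ => by rw [hXs]; ring
  have h3 : (Y * Y).trace = ∑ p : Fin d × Fin d, Y p.1 p.2 ^ 2 := by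
    rw [trace_eq_sum_prod']
    exact Finset.sum_congr rfl fun p _ => by rw [hYs]; ring
  have cs := Finset.sum_mul_sq_le_sq_mul_sq Finset.univ (fun p : Fin d × Fin d => X p.1 p.2)
      (fun p => Y p.1 p.2)
  rw [h1, h2, h3]
  have habs : |∑ p : Fin d × Fin d, X p.1 p.2 * Y p.1 p.2|
      = Real.sqrt ((∑ p : Fin d × Fin d, X p.1 p.2 * Y p.1 p.2) ^ 2) :=
    (Real.sqrt_sq_eq_abs _).symm
  rw [habs, ← Real.sqrt_mul (by positivity)]
  exact Real.sqrt_le_sqrt cs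

lemma psd_trace_nonneg' {d : ℕ} {A : Matrix (Fin d) (Fin d) ℝ} (hA : A.PosSemidef) :
    0 ≤ A.trace := by
  rw [Matrix.trace]
  apply Finset.sum_nonneg
  intro j _
  exact hA.diag_nonneg

lemma trace_submatrix_equiv'' {α β : Type*} [Fintype α] [Fintype β]
    (X : Matrix α α ℝ) (e : β ≃ α) :
    (X.submatrix e e).trace = X.trace := by
  rw [Matrix.trace, Matrix.trace]
  exact Equiv.sum_comp e (fun a => X a a)

lemma trace_mul_submatrix' {α β : Type*} [Fintype α] [Fintype β]
    (X Y : Matrix α α ℝ) (e : β ≃ α) :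
    ((X.submatrix e e) * (Y.submatrix e e)).trace = (X * Y).trace := by
  rw [Matrix.submatrix_mul_equiv, trace_submatrix_equiv'']

/-- Low-rank approximation of a psd matrix by truncating small eigenvalues. -/
lemma exists_lowrank {d : ℕ} (K : ℕ) (hK : 0 < K) (A : Matrix (Fin d) (Fin d) ℝ)
    (hA : A.PosSemidef) (ℓ : ℝ) (hℓ : 0 < ℓ) (htr : A.trace ≤ ℓ) :
    ∃ C : Matrix (Fin d) (Fin K) ℝ,
      ((A - C * Cᴴ) * (A - C * Cᴴ)).trace ≤ ℓ ^ 2 / K ∧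
      ((C * Cᴴ) * (C * Cᴴ)).trace ≤ (A * A).trace := by
  classical
  set hH := hA.1 with hHdef
  set lam : Fin d → ℝ := hH.eigenvalues with hlam
  set U : Matrix (Fin d) (Fin d) ℝ := (hH.eigenvectorUnitary : Matrix (Fin d) (Fin d) ℝ)
    with hUdef
  have hU1 : star U * U = 1 := hH.eigenvectorUnitary.2.1
  set S : (Fin d → ℝ) → Matrix (Fin d) (Fin d) ℝ :=
    fun g => U * diagonal g * star U with hSdef
  have hSmul : ∀ g h : Fin d → ℝ, S g * S h = S (g * h) := by
    intro g h
    show U * diagonal g * star U * (U * diagonal h * star U) = U * diagonal (g * h) * star U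
    have key : star U * (U * (diagonal h * star U)) = diagonal h * star U := by
      rw [← Matrix.mul_assoc, hU1, Matrix.one_mul]
    simp only [Matrix.mul_assoc, key]
    rw [← Matrix.mul_assoc (diagonal g), diagonal_mul_diagonal]
    rfl
  have hStr : ∀ g : Fin d → ℝ, (S g).trace = ∑ j, g j := by
    intro g
    show (U * diagonal g * star U).trace = _
    rw [Matrix.trace_mul_cycle, hU1, Matrix.one_mul, Matrix.trace_diagonal]
  have hspec : A = S lam := by
    have := hH.spectral_theorem
    simpa using this
  have hSsub : ∀ g h : Fin d → ℝ, S g - S h = S (g - h) := by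
    intro g h
    show U * diagonal g * star U - U * diagonal h * star U = U * diagonal (g - h) * star U
    rw [← Matrix.sub_mul, ← Matrix.mul_sub, Matrix.diagonal_sub]
    rfl
  have hlam0 : ∀ j, 0 ≤ lam j := hA.eigenvalues_nonneg
  set θ : ℝ := ℓ / K with hθdef
  have hθ0 : 0 < θ := div_pos hℓ (by exact_mod_cast hK)
  set lam' : Fin d → ℝ := fun j => if θ < lam j then lam j else 0 with hlam'
  have hlam'0 : ∀ j, 0 ≤ lam' j := by
    intro j; by_cases h : θ < lam j <;> simp [hlam', h, hlam0 j]
  have hsum : ∑ j, lam j = A.trace := by rw [hspec, hStr]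
  set T : Finset (Fin d) := Finset.univ.filter (fun j => θ < lam j) with hT
  have hcard : T.card ≤ K := by
    by_contra hc
    push_neg at hc
    have h1 : (T.card : ℝ) * θ ≤ ∑ j ∈ T, lam j := by
      rw [← nsmul_eq_mul]
      exact Finset.card_nsmul_le_sum T lam θ (fun j hj => le_of_lt (by
        simpa [hT] using (Finset.mem_filter.mp hj).2))
    have h2 : ∑ j ∈ T, lam j ≤ ∑ j, lam j :=
      Finset.sum_le_sum_of_subset_of_nonneg (Finset.subset_univ T)
        (fun j _ _ => hlam0 j)
    have h3 : (K : ℝ) * θ < (T.card : ℝ) * θ := by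
      apply mul_lt_mul_of_pos_right _ hθ0
      exact_mod_cast hc
    have h4 : (K : ℝ) * θ = ℓ := by
      have hK' : (K : ℝ) ≠ 0 := by positivity
      rw [hθdef]; field_simp
    linarith [htr, hsum]
  have hemb : Nonempty ({j // j ∈ T} ↪ Fin K) := by
    apply Function.Embedding.nonempty_of_card_le
    simpa [Fintype.card_coe] using hcard
  obtain ⟨e⟩ := hemb
  have hKne : Nonempty (Fin K) := ⟨⟨0, hK⟩⟩
  set ι : Fin d → Fin K := fun j => if h : j ∈ T then e ⟨j, h⟩ else Classical.arbitrary _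
    with hι
  have hιinj : ∀ j j', j ∈ T → j' ∈ T → ι j = ι j' → j = j' := by
    intro j j' hj hj' heq
    simp only [hι, dif_pos hj, dif_pos hj'] at heq
    exact Subtype.mk_eq_mk.mp (e.injective heq)
  set W : Matrix (Fin d) (Fin K) ℝ :=
    fun j s => if s = ι j then Real.sqrt (lam' j) else 0 with hW
  have hWW : W * Wᴴ = diagonal lam' := by
    ext j j'
    rw [Matrix.mul_apply, Matrix.diagonal_apply]
    by_cases hjj : j = j'
    · subst hjj
      simp only [conjTranspose_apply, star_trivial]; simp only [hW]
      rw [Finset.sum_eq_single (ι j)]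
      · simp [Real.mul_self_sqrt (hlam'0 j)]
      · intro s _ hs; simp [hs]
      · simp
    · simp only [hjj, if_false]
      apply Finset.sum_eq_zero
      intro s _
      simp only [conjTranspose_apply, star_trivial]; simp only [hW]
      by_cases h1 : s = ι j
      · by_cases h2 : s = ι j'
        · by_cases hjT : j ∈ T
          · by_cases hj'T : j' ∈ T
            · exact absurd (hιinj j j' hjT hj'T (h1 ▸ h2 ▸ rfl)) hjj
            · have : lam' j' = 0 := by
                simp only [hlam']
                have : ¬ θ < lam j' := by simpa [hT] using hj'T
                simp [this]
              simp [h1, h2, this]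
          · have : lam' j = 0 := by
              simp only [hlam']
              have : ¬ θ < lam j := by simpa [hT] using hjT
              simp [this]
            simp [h1, h2, this]
        · simp [h2]
      · simp [h1]
  refine ⟨U * W, ?_, ?_⟩
  · have hCC : U * W * (U * W)ᴴ = S lam' := by
      rw [conjTranspose_mul, Matrix.mul_assoc, ← Matrix.mul_assoc W, hWW,
        ← Matrix.mul_assoc]
      simp [hSdef, Matrix.star_eq_conjTranspose]
    rw [hCC, hspec, hSsub, hSmul, hStr]
    have hbound : ∀ j, (lam - lam') j * (lam - lam') j ≤ θ * lam j := by
      intro j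
      simp only [Pi.sub_apply, hlam']
      by_cases h : θ < lam j
      · simp only [if_pos h, sub_self, mul_zero, zero_mul]
        exact mul_nonneg hθ0.le (hlam0 j)
      · push_neg at h
        simp only [if_neg (not_lt.mpr h), sub_zero]
        exact mul_le_mul_of_nonneg_right h (hlam0 j)
    calc ∑ j, (lam - lam') j * (lam - lam') j ≤ ∑ j, θ * lam j :=
          Finset.sum_le_sum (fun j _ => hbound j)
      _ = θ * A.trace := by rw [← Finset.mul_sum, hsum]
      _ ≤ θ * ℓ := mul_le_mul_of_nonneg_left htr (le_of_lt hθ0)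
      _ = ℓ ^ 2 / K := by rw [hθdef]; ring
  · have hCC : U * W * (U * W)ᴴ = S lam' := by
      rw [conjTranspose_mul, Matrix.mul_assoc, ← Matrix.mul_assoc W, hWW,
        ← Matrix.mul_assoc]
      simp [hSdef, Matrix.star_eq_conjTranspose]
    rw [hCC, hspec, hSmul, hSmul, hStr, hStr]
    apply Finset.sum_le_sum
    intro j _
    simp only [Pi.mul_apply, hlam']
    by_cases h : θ < lam j
    · simp [h]
    · simp only [if_neg h, mul_zero]
      exact mul_self_nonneg _

set_option maxHeartbeats 3200000 in
theorem cpsd_approximation_first_bound {n d : ℕ} (hn : 0 < n)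
    (M : Matrix (Fin n) (Fin n) ℝ) (A : Fin n → Matrix (Fin d) (Fin d) ℝ)
    (hA : ∀ i, (A i).PosSemidef)
    (hGram : ∀ i j, M i j = ((A i) * (A j)).trace)
    (ℓ L : ℝ) (hℓ : ℓ = ⨆ i, (A i).trace) (hL : L = ⨆ i, M i i)
    (ε : ℝ) (hε0 : 0 < ε) (hε : ε < (1 / 2) * min (ℓ ^ 2) L) :
    ∃ (N : Matrix (Fin n) (Fin n) ℝ) (r : ℕ)
      (f : Fin n → Matrix (Fin r) (Fin r) ℝ),
      (∀ i, (f i).PosSemidef) ∧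
      (∀ i j, N i j = ((f i) * (f j)).trace) ∧
      r ≤ n * ⌈9 * L * ℓ ^ 2 / (2 * ε ^ 2)⌉₊ ∧
      ∀ i j, |M i j - N i j| < ε := by
  classical
  have hminL : min (ℓ ^ 2) L ≤ L := min_le_right _ _
  have hminl : min (ℓ ^ 2) L ≤ ℓ ^ 2 := min_le_left _ _
  have hεL : ε < L / 2 := by linarith
  have hεl2 : ε < ℓ ^ 2 / 2 := by linarith
  have hL0 : 0 < L := by linarith
  have hl20 : 0 < ℓ ^ 2 := by linarith
  have hℓnn : 0 ≤ ℓ := by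
    rw [hℓ]
    have h0 : (A ⟨0, hn⟩).trace ≤ ⨆ i, (A i).trace :=
      le_ciSup (f := fun i => (A i).trace)
        (Set.Finite.bddAbove (Set.finite_range _)) ⟨0, hn⟩
    exact le_trans (psd_trace_nonneg' (hA _)) h0
  have hℓ0 : 0 < ℓ := by
    rcases lt_or_eq_of_le hℓnn with h | h
    · exact h
    · exfalso; rw [← h] at hl20; simp at hl20
  set K := ⌈9 * L * ℓ ^ 2 / (2 * ε ^ 2)⌉₊ with hK
  have hKpos : 0 < K := Nat.ceil_pos.mpr (by positivity)
  have hKge : 9 * L * ℓ ^ 2 / (2 * ε ^ 2) ≤ (K : ℝ) := Nat.le_ceil _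
  have hKR0 : (0 : ℝ) < K := by exact_mod_cast hKpos
  have htr_le : ∀ i, (A i).trace ≤ ℓ := by
    intro i; rw [hℓ]
    exact le_ciSup (f := fun i => (A i).trace)
      (Set.Finite.bddAbove (Set.finite_range _)) i
  have hMii : ∀ i, M i i ≤ L := by
    intro i; rw [hL]
    exact le_ciSup (Set.Finite.bddAbove (Set.finite_range fun i => M i i)) i
  choose C hC1 hC2 using fun i => exists_lowrank K hKpos (A i) (hA i) ℓ hℓ0 (htr_le i)
  set B : Fin n → Matrix (Fin d) (Fin d) ℝ := fun i => C i * (C i)ᴴ with hB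
  have hBpsd : ∀ i, (B i).PosSemidef := fun i => posSemidef_self_mul_conjTranspose (C i)
  -- global block construction
  set D : Matrix (Fin d) (Fin n × Fin K) ℝ := fun a p => C p.1 a p.2 with hD
  set E : Fin n → Matrix (Fin n × Fin K) (Fin n × Fin K) ℝ :=
    fun i => diagonal (fun p => if p.1 = i then 1 else 0) with hE
  have hQ : (Dᴴ * D).PosSemidef := posSemidef_conjTranspose_mul_self D
  obtain ⟨R, hRH, hRR⟩ : ∃ R : Matrix (Fin n × Fin K) (Fin n × Fin K) ℝ,
      Rᴴ = R ∧ R * R = Dᴴ * D :=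
    by
      open MatrixOrder in
      exact ⟨CFC.sqrt (Dᴴ * D), (CFC.sqrt_nonneg _).posSemidef.1,
        CFC.sqrt_mul_sqrt_self _ (Matrix.nonneg_iff_posSemidef.mpr hQ)⟩
  set f0 : Fin n → Matrix (Fin n × Fin K) (Fin n × Fin K) ℝ := fun i => R * E i * R with hf0
  have hEpsd : ∀ i, (E i).PosSemidef := fun i =>
    posSemidef_diagonal_iff.mpr (by intro p; by_cases h : p.1 = i <;> simp [h])
  have hf0psd : ∀ i, (f0 i).PosSemidef := by
    intro i
    have := (hEpsd i).mul_mul_conjTranspose_same R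
    rwa [hRH] at this
  have hDED : ∀ i, D * E i * Dᴴ = B i := by
    intro i
    ext a b
    rw [Matrix.mul_apply]
    simp only [hE, Matrix.mul_diagonal]
    simp only [Matrix.conjTranspose_apply, star_trivial]
    simp only [hD, hB, Matrix.mul_apply]
    rw [Fintype.sum_prod_type]
    rw [Finset.sum_eq_single i]
    · simp
    · intro x _ hx
      apply Finset.sum_eq_zero
      intro s _
      simp [hx]
    · simp
  have htrf0 : ∀ i j, (f0 i * f0 j).trace = (B i * B j).trace := by
    intro i j
    have e1 : (f0 i * f0 j).trace = (E i * (Dᴴ * D) * (E j * (Dᴴ * D))).trace := by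
      show (R * E i * R * (R * E j * R)).trace = _
      rw [show R * E i * R * (R * E j * R) = R * (E i * (R * R) * (E j * R)) from by
        simp only [Matrix.mul_assoc]]
      rw [Matrix.trace_mul_comm]
      rw [show E i * (R * R) * (E j * R) * R = E i * (R * R) * (E j * (R * R)) from by
        simp only [Matrix.mul_assoc]]
      rw [hRR]
    have e2 : (B i * B j).trace = (E i * (Dᴴ * D) * (E j * (Dᴴ * D))).trace := by
      rw [← hDED i, ← hDED j]
      rw [show D * E i * Dᴴ * (D * E j * Dᴴ) = D * (E i * Dᴴ * (D * E j * Dᴴ)) from by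
        simp only [Matrix.mul_assoc]]
      rw [Matrix.trace_mul_comm]
      rw [show E i * Dᴴ * (D * E j * Dᴴ) * D = E i * (Dᴴ * D) * (E j * (Dᴴ * D)) from by
        simp only [Matrix.mul_assoc]]
    rw [e1, e2]
  -- the error bound
  have hsqrt_small : ∀ i, Real.sqrt (((A i - B i) * (A i - B i)).trace) ≤
      Real.sqrt (ℓ ^ 2 / K) := fun i => Real.sqrt_le_sqrt (hC1 i)
  have hsqrt_A : ∀ j, Real.sqrt ((A j * A j).trace) ≤ Real.sqrt L := by
    intro j
    apply Real.sqrt_le_sqrt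
    rw [← hGram]
    exact hMii j
  have hsqrt_B : ∀ i, Real.sqrt ((B i * B i).trace) ≤ Real.sqrt L := by
    intro i
    apply Real.sqrt_le_sqrt
    refine le_trans (hC2 i) ?_
    rw [← hGram]
    exact hMii i
  have hhalf : Real.sqrt (ℓ ^ 2 / K) * Real.sqrt L < ε / 2 := by
    rw [← Real.sqrt_mul (by positivity)]
    rw [show ε / 2 = Real.sqrt ((ε / 2) ^ 2) from (Real.sqrt_sq (by positivity)).symm]
    apply Real.sqrt_lt_sqrt (by positivity)
    have h1 : ℓ ^ 2 / K * L ≤ 2 * ε ^ 2 / 9 := by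
      rw [div_mul_eq_mul_div, div_le_div_iff₀ hKR0 (by norm_num)]
      have h9 : 9 * L * ℓ ^ 2 ≤ (K : ℝ) * (2 * ε ^ 2) :=
        (div_le_iff₀ (by positivity)).mp hKge
      linear_combination h9
    have h2 : 2 * ε ^ 2 / 9 < (ε / 2) ^ 2 := by nlinarith [pow_pos hε0 2]
    linarith
  have herr : ∀ i j, |M i j - (B i * B j).trace| < ε := by
    intro i j
    have hsplit : M i j - (B i * B j).trace
        = ((A i - B i) * A j).trace + (B i * (A j - B j)).trace := by
      rw [hGram, Matrix.sub_mul, Matrix.mul_sub, Matrix.trace_sub, Matrix.trace_sub]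
      ring
    have cs1 := trace_mul_cs ((hA i).1.sub (hBpsd i).1) (hA j).1
    have cs2 := trace_mul_cs (hBpsd i).1 ((hA j).1.sub (hBpsd j).1)
    have b1 : |((A i - B i) * A j).trace| < ε / 2 := by
      refine lt_of_le_of_lt (le_trans cs1 ?_) hhalf
      exact mul_le_mul (hsqrt_small i) (hsqrt_A j) (Real.sqrt_nonneg _) (Real.sqrt_nonneg _)
    have b2 : |(B i * (A j - B j)).trace| < ε / 2 := by
      have hb := mul_le_mul (hsqrt_B i) (hsqrt_small j) (Real.sqrt_nonneg _) (Real.sqrt_nonneg _)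
      have hc := le_trans cs2 hb
      rw [mul_comm] at hc
      exact lt_of_le_of_lt hc hhalf
    calc |M i j - (B i * B j).trace|
        ≤ |((A i - B i) * A j).trace| + |(B i * (A j - B j)).trace| := by
          rw [hsplit]; exact abs_add_le _ _
      _ < ε / 2 + ε / 2 := add_lt_add b1 b2
      _ = ε := by ring
  -- reindex to Fin (n * K)
  have key : ∀ i j : Fin n,
      (((f0 i).submatrix (finProdFinEquiv (m := n) (n := K)).symm finProdFinEquiv.symm) *
       ((f0 j).submatrix finProdFinEquiv.symm finProdFinEquiv.symm)).trace
      = (f0 i * f0 j).trace :=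
    fun i j => trace_mul_submatrix' (f0 i) (f0 j) finProdFinEquiv.symm
  refine ⟨fun i j =>
      (((f0 i).submatrix (finProdFinEquiv (m := n) (n := K)).symm finProdFinEquiv.symm) *
       ((f0 j).submatrix finProdFinEquiv.symm finProdFinEquiv.symm)).trace,
    n * K,
    fun i => (f0 i).submatrix finProdFinEquiv.symm finProdFinEquiv.symm,
    ?_, fun i j => rfl, le_refl _, ?_⟩
  · intro i
    exact (posSemidef_submatrix_equiv finProdFinEquiv.symm).mpr (hf0psd i)
  · intro i j
    beta_reduce
    rw [key, htrf0]
    exact herr i j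
end
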